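/- Let X be a nonempty closed subset of the real line ℝ with d = d_H(X, ℝ) < ∞. For t ∈ [0, d] let C_t = B_t(X) be the closed t-neighborhood of X in ℝ. Then for all 0 ≤ t ≤ s ≤ d one has d_GH(C_t, C_s) = s − t (the sets C_t carrying the induced metrics); that is, the canonical Hausdorff geodesic connecting X and ℝ is a shortest curve with respect to the Gromov–Hausdorff distance. -/

import Mathlib

open scoped ENNReal

noncomputable section

/-- Ultrametric pseudodistance: infimum over chains from `x` to `y` of the
maximal edge length of the chain. -/
noncomputable def ultraDist {X : Type*} [MetricSpace X] (x y : X) : ℝ≥0∞ :=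
  ⨅ (n : ℕ) (f : Fin (n + 1) → X) (_ : f 0 = x) (_ : f (Fin.last n) = y),
    ⨆ i : Fin n, edist (f i.castSucc) (f i.succ)

/-- Ultrametric pseudodiameter. -/
noncomputable def ultraDiam (X : Type*) [MetricSpace X] : ℝ≥0∞ :=
  ⨆ (x : X) (y : X), ultraDist x y

/-- A correspondence between `X` and `Y`: a relation whose projections are surjective. -/
def IsCorrespondence {X Y : Type*} (R : Set (X × Y)) : Prop :=
  (∀ x : X, ∃ y : Y, (x, y) ∈ R) ∧ (∀ y : Y, ∃ x : X, (x, y) ∈ R)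

/-- Distortion of a relation. -/
noncomputable def distortion {X Y : Type*} [MetricSpace X] [MetricSpace Y]
    (R : Set (X × Y)) : ℝ≥0∞ :=
  ⨆ (p ∈ R) (q ∈ R), ENNReal.ofReal |dist p.1 q.1 - dist p.2 q.2|

/-- Gromov–Hausdorff distance: half the infimal distortion of correspondences. -/
noncomputable def ghDist (X Y : Type*) [MetricSpace X] [MetricSpace Y] : ℝ≥0∞ :=
  (⨅ (R : Set (X × Y)) (_ : IsCorrespondence R), distortion R) / 2


open Metric EMetric Set

lemma dist_le_distortion {X Y : Type*} [MetricSpace X] [MetricSpace Y] {R : Set (X × Y)}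
    {p q : X × Y} (hp : p ∈ R) (hq : q ∈ R) :
    ENNReal.ofReal |dist p.1 q.1 - dist p.2 q.2| ≤ distortion R :=
  le_iSup₂_of_le p hp (le_iSup₂_of_le q hq le_rfl)
lemma ultraDist_le_chain {X : Type*} [MetricSpace X] {x y : X} {n : ℕ}
    (f : Fin (n + 1) → X) (h0 : f 0 = x) (hl : f (Fin.last n) = y) :
    ultraDist x y ≤ ⨆ i : Fin n, edist (f i.castSucc) (f i.succ) :=
  iInf_le_of_le n (iInf_le_of_le f (iInf_le_of_le h0 (iInf_le_of_le hl le_rfl)))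
lemma ultraDist_le_edist {X : Type*} [MetricSpace X] (x y : X) :
    ultraDist x y ≤ edist x y := by
  refine le_trans (ultraDist_le_chain (n := 1) ![x, y] rfl rfl) ?_
  refine iSup_le fun i => ?_
  have : i = 0 := Subsingleton.elim i 0
  subst this; simp
lemma ultraDist_le_ultraDiam {X : Type*} [MetricSpace X] (x y : X) :
    ultraDist x y ≤ ultraDiam X :=
  le_iSup₂_of_le x y le_rfl

/-- edge comparison along a correspondence -/
lemma edist_le_edist_add_distortion {X Y : Type*} [MetricSpace X] [MetricSpace Y]
    {R : Set (X × Y)} {p q : X × Y} (hp : p ∈ R) (hq : q ∈ R) :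
    edist p.1 q.1 ≤ edist p.2 q.2 + distortion R := by
  rw [edist_dist, edist_dist]
  have h1 : dist p.1 q.1 ≤ dist p.2 q.2 + |dist p.1 q.1 - dist p.2 q.2| := by
    have := abs_sub_abs_le_abs_sub (dist p.1 q.1) (dist p.2 q.2)
    have h := le_abs_self (dist p.1 q.1 - dist p.2 q.2)
    linarith
  calc ENNReal.ofReal (dist p.1 q.1)
      ≤ ENNReal.ofReal (dist p.2 q.2 + |dist p.1 q.1 - dist p.2 q.2|) :=
        ENNReal.ofReal_le_ofReal h1
    _ ≤ ENNReal.ofReal (dist p.2 q.2) + ENNReal.ofReal |dist p.1 q.1 - dist p.2 q.2| :=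
        ENNReal.ofReal_add_le
    _ ≤ ENNReal.ofReal (dist p.2 q.2) + distortion R := by
        gcongr; exact dist_le_distortion hp hq

/-- stability of ultraDiam under correspondences -/
lemma ultraDiam_le_of_corr {X Y : Type*} [MetricSpace X] [MetricSpace Y]
    {R : Set (X × Y)} (hR : IsCorrespondence R) :
    ultraDiam X ≤ ultraDiam Y + distortion R := by
  refine iSup₂_le fun x x' => ?_
  obtain ⟨y, hy⟩ := hR.1 x
  obtain ⟨y', hy'⟩ := hR.1 x'
  have key : ultraDist x x' ≤ ultraDist y y' + distortion R := by
    rw [← tsub_le_iff_right]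
    rw [ultraDist]
    refine le_iInf fun n => le_iInf fun g => le_iInf fun hg0 => le_iInf fun hgl => ?_
    rw [tsub_le_iff_right]
    rcases n with _ | m
    · -- y = y', use single edge chain
      have hyy : y = y' := by rw [← hg0, ← hgl]; rfl
      subst hyy
      have h1 : ultraDist x x' ≤ edist x x' := ultraDist_le_edist x x'
      have h2 : edist x x' ≤ distortion R := by
        have := dist_le_distortion (p := (x, y)) (q := (x', y)) hy hy'
        simpa [edist_dist, abs_of_nonneg dist_nonneg] using this
      calc ultraDist x x' ≤ distortion R := h1.trans h2
        _ ≤ _ := le_add_self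
    · -- transport the chain
      have hlast0 : (Fin.last (m+1) : Fin (m+2)) ≠ 0 := by
        simp [Fin.ext_iff]
      classical
      have hex : ∀ i : Fin (m + 2), ∃ a : X, (a, g i) ∈ R ∧
          (i = 0 → a = x) ∧ (i = Fin.last (m+1) → a = x') := by
        intro i
        by_cases h1 : i = 0
        · refine ⟨x, ?_, fun _ => rfl, fun h => absurd (h1.symm.trans h) (Ne.symm hlast0)⟩
          rw [h1, hg0]; exact hy
        · by_cases h2 : i = Fin.last (m+1)
          · refine ⟨x', ?_, fun h => absurd h h1, fun _ => rfl⟩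
            rw [h2, hgl]; exact hy'
          · obtain ⟨a, ha⟩ := hR.2 (g i)
            exact ⟨a, ha, fun h => absurd h h1, fun h => absurd h h2⟩
      choose f hfR hf0 hfl using hex
      refine (ultraDist_le_chain f (hf0 0 rfl) (hfl _ rfl)).trans ?_
      refine iSup_le fun i => ?_
      have := edist_le_edist_add_distortion (p := (f i.castSucc, g i.castSucc))
        (q := (f i.succ, g i.succ)) (hfR _) (hfR _)
      refine this.trans ?_
      gcongr
      exact le_iSup (fun j : Fin (m+1) => edist (g j.castSucc) (g j.succ)) i
  refine key.trans ?_
  gcongr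
  exact ultraDist_le_ultraDiam y y'

lemma sup_infEdist_eq_haus (A : Set ℝ) :
    (⨆ p : ℝ, infEdist p A) = hausdorffEdist A univ := by
  simp only [hausdorffEdist, infEdist]; rw [hausdorffEdist_def]
  have h1 : (⨆ x ∈ A, infEdist x (univ : Set ℝ)) = 0 := by
    simp [infEdist, infEdist_zero_of_mem (mem_univ _)]
  simp only [infEdist] at h1; rw [h1]
  simp [iSup_univ]

lemma infEdist_eq_ofReal_infDist {A : Set ℝ} (hA : A.Nonempty) (q : ℝ) :
    infEdist q A = ENNReal.ofReal (infDist q A) := by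
  rw [infDist, ENNReal.ofReal_toReal (infEdist_ne_top hA)]; rfl

lemma infDist_le_of_mem_cthickening {A : Set ℝ} {t : ℝ} (ht : 0 ≤ t) {q : ℝ}
    (hq : q ∈ cthickening t A) : infDist q A ≤ t := by
  rw [mem_cthickening_iff] at hq
  have := ENNReal.toReal_mono ENNReal.ofReal_ne_top hq
  rwa [ENNReal.toReal_ofReal ht] at this

lemma mem_cthickening_of_infDist_le {A : Set ℝ} (hA : A.Nonempty) {t q : ℝ}
    (hq : infDist q A ≤ t) : q ∈ cthickening t A := by
  rw [mem_cthickening_iff]; rw [show infEDist q A = infEdist q A from rfl, infEdist_eq_ofReal_infDist hA]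
  exact ENNReal.ofReal_le_ofReal hq

/-- infDist to a cthickening on the real line. -/
lemma infDist_cthickening_real (A : Set ℝ) (hA : A.Nonempty) (hAc : IsClosed A)
    {t : ℝ} (ht : 0 ≤ t) (p : ℝ) :
    infDist p (cthickening t A) = max (infDist p A - t) 0 := by
  have hCne : (cthickening t A).Nonempty := hA.mono (self_subset_cthickening A)
  refine le_antisymm ?_ ?_
  · obtain ⟨z, hz, hdz⟩ := hAc.exists_infDist_eq_dist hA p
    by_cases hle : dist p z ≤ t
    · have hp : p ∈ cthickening t A :=
        mem_cthickening_of_infDist_le hA (by rw [hdz]; exact hle)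
      rw [infDist_zero_of_mem hp]
      exact le_max_right _ _
    · push_neg at hle
      set w : ℝ := if z ≤ p then z + t else z - t with hw
      have hwz : dist w z = t := by
        rcases le_or_gt z p with h | h
        · rw [hw, if_pos h, Real.dist_eq, show z + t - z = t by ring, abs_of_nonneg ht]
        · rw [hw, if_neg (not_le.mpr h), Real.dist_eq, show z - t - z = -t by ring,
            abs_neg, abs_of_nonneg ht]
      have hwC : w ∈ cthickening t A :=
        mem_cthickening_of_infDist_le hA ((infDist_le_dist_of_mem hz).trans hwz.le)
      have hpw : dist p w = dist p z - t := by
        rcases le_or_gt z p with h | h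
        · have : z + t ≤ p := by
            have := hle; rw [Real.dist_eq, abs_of_nonneg (by linarith)] at this; linarith
          simp only [hw, if_pos h]
          rw [Real.dist_eq, Real.dist_eq, abs_of_nonneg (by linarith),
            abs_of_nonneg (by linarith)]
          ring
        · have : p ≤ z - t := by
            have := hle; rw [Real.dist_eq, abs_of_nonpos (by linarith)] at this; linarith
          simp only [hw, if_neg (not_le.mpr h)]
          rw [Real.dist_eq, Real.dist_eq, abs_of_nonpos (by linarith),
            abs_of_nonpos (by linarith)]
          ring
      have : infDist p (cthickening t A) ≤ dist p z - t := by
        rw [← hpw]; exact infDist_le_dist_of_mem hwC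
      exact this.trans (le_max_of_le_left (by rw [hdz]))
  · refine max_le ?_ infDist_nonneg
    have hkey : ∀ q ∈ cthickening t A, infDist p A - t ≤ dist p q := by
      intro q hq
      have h1 : infDist q A ≤ t := infDist_le_of_mem_cthickening ht hq
      have h2 : infDist p A ≤ infDist q A + dist p q := infDist_le_infDist_add_dist
      linarith
    have : Nonempty (cthickening t A) := hCne.to_subtype
    rw [show infDist p (cthickening t A) = ⨅ q : cthickening t A, dist p (q:ℝ) from infDist_eq_iInf]
    exact le_ciInf fun (q : cthickening t A) => hkey q.1 q.2

lemma haus_cthickening_real (A : Set ℝ) (hA : A.Nonempty) (hAc : IsClosed A)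
    (hfin : hausdorffEdist A univ ≠ ⊤) {t : ℝ} (ht : 0 ≤ t)
    (htd : t ≤ (hausdorffEdist A univ).toReal) :
    hausdorffEdist (cthickening t A) univ
      = ENNReal.ofReal ((hausdorffEdist A univ).toReal - t) := by
  set d := (hausdorffEdist A univ).toReal with hd
  have hCne : (cthickening t A).Nonempty := hA.mono (self_subset_cthickening A)
  have hinfle : ∀ p : ℝ, infDist p A ≤ d := by
    intro p
    have h1 : infEdist p A ≤ hausdorffEdist A univ := by
      rw [show hausdorffEdist A univ = hausdorffEDist A univ from rfl, hausdorffEdist_comm]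
      exact infEdist_le_hausdorffEdist_of_mem (mem_univ p)
    exact ENNReal.toReal_mono hfin h1
  rw [← sup_infEdist_eq_haus]
  refine le_antisymm ?_ ?_
  · refine iSup_le fun p => ?_
    rw [infEdist_eq_ofReal_infDist hCne, infDist_cthickening_real A hA hAc ht]
    apply ENNReal.ofReal_le_ofReal
    exact max_le (by linarith [hinfle p]) (by linarith)
  · have key : ∀ r' : ℝ, r' < d - t → ENNReal.ofReal r' ≤ ⨆ p, infEdist p (cthickening t A) := by
      intro r' hr'
      rcases le_or_gt r' 0 with h | h
      · simp [ENNReal.ofReal_eq_zero.mpr h]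
      · have hrt : r' + t < d := by linarith
        have hlt2 : ENNReal.ofReal (r' + t) < ⨆ p : ℝ, infEdist p A := by
          rw [sup_infEdist_eq_haus, ← ENNReal.ofReal_toReal hfin, ← hd]
          exact (ENNReal.ofReal_lt_ofReal_iff (lt_of_le_of_lt (by positivity) hrt)).mpr hrt
        obtain ⟨p, hp⟩ := lt_iSup_iff.mp hlt2
        have hpd : r' + t < infDist p A := by
          rw [infEdist_eq_ofReal_infDist hA] at hp
          exact (ENNReal.ofReal_lt_ofReal_iff_of_nonneg (by positivity)).mp hp
        have hstep : r' ≤ infDist p (cthickening t A) := by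
          rw [infDist_cthickening_real A hA hAc ht]
          exact le_max_of_le_left (by linarith)
        calc ENNReal.ofReal r' ≤ infEdist p (cthickening t A) := by
              rw [infEdist_eq_ofReal_infDist hCne]; exact ENNReal.ofReal_le_ofReal hstep
          _ ≤ _ := le_iSup (fun q : ℝ => infEdist q (cthickening t A)) p
    refine ENNReal.le_of_forall_pos_le_add fun ε hε _ => ?_
    have hεR : (0:ℝ) < (ε:ℝ) := hε
    have h1 := key (d - t - ε) (by linarith)
    calc ENNReal.ofReal (d - t) = ENNReal.ofReal ((d - t - ε) + ε) := by ring_nf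
      _ ≤ ENNReal.ofReal (d - t - ε) + ENNReal.ofReal ε := ENNReal.ofReal_add_le
      _ ≤ (⨆ p, infEdist p (cthickening t A)) + ε := by
          rw [ENNReal.ofReal_coe_nnreal]; exact add_le_add_left h1 _

/-- upper bound: ultraDiam of a closed real set is at most twice the Hausdorff
distance to the line. -/
lemma ultraDiam_le (A : Set ℝ) (hA : A.Nonempty) (hAc : IsClosed A)
    (hfin : hausdorffEdist A univ ≠ ⊤) :
    ultraDiam A ≤ ENNReal.ofReal (2 * (hausdorffEdist A univ).toReal) := by
  set d := (hausdorffEdist A univ).toReal with hd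
  have hd0 : 0 ≤ d := ENNReal.toReal_nonneg
  have hinfle : ∀ p : ℝ, infDist p A ≤ d := by
    intro p
    have h1 : infEdist p A ≤ hausdorffEdist A univ := by
      rw [show hausdorffEdist A univ = hausdorffEDist A univ from rfl, hausdorffEdist_comm]
      exact infEdist_le_hausdorffEdist_of_mem (mem_univ p)
    exact ENNReal.toReal_mono hfin h1
  refine iSup₂_le fun x y => ?_
  refine ENNReal.le_of_forall_pos_le_add fun ε hε _ => ?_
  have hεR : (0:ℝ) < (ε:ℝ) := hε
  obtain ⟨n, hn⟩ := exists_nat_gt (|(y:ℝ) - (x:ℝ)| / ε)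
  have hn0 : 0 < n := by
    by_contra h
    push_neg at h
    interval_cases n
    simp only [Nat.cast_zero] at hn
    have : 0 ≤ |(y:ℝ) - (x:ℝ)| / ε := by positivity
    linarith
  have hnR : (0:ℝ) < (n:ℝ) := by exact_mod_cast hn0
  have hyx : |(y:ℝ) - (x:ℝ)| < n * ε := by
    rwa [div_lt_iff₀ hεR] at hn
  -- chain points
  set c : ℕ → ℝ := fun i => (x:ℝ) + i * ((y:ℝ) - (x:ℝ)) / n with hc
  have hc0 : c 0 = (x:ℝ) := by simp [hc]
  have hcn : c n = (y:ℝ) := by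
    simp only [hc]; rw [mul_div_cancel_left₀ _ hnR.ne']; ring
  have hnear : ∀ i : ℕ, ∃ a : A, dist (c i) (a:ℝ) ≤ d := by
    intro i
    obtain ⟨a, ha, hda⟩ := hAc.exists_infDist_eq_dist hA (c i)
    exact ⟨⟨a, ha⟩, by rw [← hda]; exact hinfle _⟩
  choose a hadist using hnear
  set f : Fin (n + 1) → A := fun i =>
    if (i:ℕ) = 0 then x else if (i:ℕ) = n then y else a i with hf
  have hclose : ∀ i : Fin (n+1), dist ((f i : ℝ)) (c i) ≤ d := by
    intro i
    by_cases h1 : (i:ℕ) = 0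
    · have hfi : f i = x := by simp only [hf]; rw [if_pos h1]
      have hci : c (i:ℕ) = (x:ℝ) := by rw [h1, hc0]
      rw [hfi, hci]
      simp [hd0]
    · by_cases h2 : (i:ℕ) = n
      · have hfi : f i = y := by
          simp only [hf, h2, if_neg h1]
          simp
        have hci : c (i:ℕ) = (y:ℝ) := by rw [h2, hcn]
        rw [hfi, hci]
        simp [hd0]
      · have hfi : f i = a (i:ℕ) := by simp only [hf]; rw [if_neg h1, if_neg h2]
        rw [hfi, dist_comm]
        exact hadist i
  have hf0 : f 0 = x := by simp [hf]
  have hfl : f (Fin.last n) = y := by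
    have hne : ((Fin.last n : Fin (n+1)) : ℕ) ≠ 0 := by simp [Fin.val_last]; omega
    simp only [hf, if_neg hne, Fin.val_last]
    simp
  refine (ultraDist_le_chain f hf0 hfl).trans ?_
  refine iSup_le fun i => ?_
  have hcc : dist (c i.castSucc) (c i.succ) < ε := by
    have : (i.succ : ℕ) = (i.castSucc : ℕ) + 1 := by simp
    rw [Real.dist_eq, hc]
    simp only [Fin.coe_castSucc, Fin.val_succ]
    have heq : ((x:ℝ) + (i:ℕ) * ((y:ℝ) - x) / n) - ((x:ℝ) + ((i:ℕ) + 1) * ((y:ℝ) - x) / n)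
        = -(((y:ℝ) - x) / n) := by ring
    push_cast
    rw [heq, abs_neg, abs_div, abs_of_nonneg hnR.le, div_lt_iff₀ hnR]
    calc |(y:ℝ) - (x:ℝ)| < n * ε := hyx
      _ = ε * n := by ring
  have hdist : dist (f i.castSucc) (f i.succ) ≤ 2 * d + ε := by
    rw [Subtype.dist_eq]
    calc dist ((f i.castSucc : ℝ)) ((f i.succ : ℝ))
        ≤ dist ((f i.castSucc : ℝ)) (c i.castSucc) + dist (c i.castSucc) (c i.succ)
          + dist (c i.succ) ((f i.succ : ℝ)) := dist_triangle4 _ _ _ _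
      _ ≤ d + ε + d := by
          have h1 := hclose i.castSucc
          have h2 := hclose i.succ
          rw [dist_comm (c i.succ)] at *
          linarith [hcc]
      _ = 2 * d + ε := by ring
  calc edist (f i.castSucc) (f i.succ) = ENNReal.ofReal (dist (f i.castSucc) (f i.succ)) :=
        edist_dist _ _
    _ ≤ ENNReal.ofReal (2 * d + ε) := ENNReal.ofReal_le_ofReal hdist
    _ ≤ ENNReal.ofReal (2 * d) + ENNReal.ofReal ε := ENNReal.ofReal_add_le
    _ = ENNReal.ofReal (2 * d) + ε := by rw [ENNReal.ofReal_coe_nnreal]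

/-- crossing lemma: a chain in a set avoiding the ball around `p` of radius `r`
has an edge of length at least `2r`. -/
lemma chain_crossing {A : Set ℝ} {p r : ℝ} (hr : 0 < r)
    (hfar : ∀ q ∈ A, r < dist p q) {n : ℕ} (f : Fin (n + 1) → A)
    (h0 : (f 0 : ℝ) < p) (hl : p < (f (Fin.last n) : ℝ)) :
    ∃ i : Fin n, 2 * r ≤ dist ((f i.castSucc : ℝ)) ((f i.succ : ℝ)) := by
  classical
  have hQ : ∃ k : ℕ, ∃ h : k < n + 1, ¬ ((f ⟨k, h⟩ : ℝ) < p) :=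
    ⟨n, n.lt_succ_self, not_lt.mpr hl.le⟩
  obtain ⟨hkn, hknot⟩ := Nat.find_spec hQ
  have hk0 : Nat.find hQ ≠ 0 := by
    intro h
    apply hknot
    have he : (⟨Nat.find hQ, hkn⟩ : Fin (n+1)) = 0 := by
      rw [Fin.ext_iff]
      exact h
    rw [he]; exact h0
  have hkn' : Nat.find hQ - 1 < n := by omega
  refine ⟨⟨Nat.find hQ - 1, hkn'⟩, ?_⟩
  have hprev : (f (Fin.castSucc ⟨Nat.find hQ - 1, hkn'⟩) : ℝ) < p := by
    by_contra hcon
    exact Nat.find_min hQ (m := Nat.find hQ - 1) (by omega) ⟨by omega, hcon⟩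
  have hnext : ¬ ((f (Fin.succ ⟨Nat.find hQ - 1, hkn'⟩) : ℝ) < p) := by
    have he : Fin.succ (⟨Nat.find hQ - 1, hkn'⟩ : Fin n) = ⟨Nat.find hQ, hkn⟩ := by
      simp only [Fin.ext_iff, Fin.val_succ]
      omega
    rw [he]; exact hknot
  have hu := hfar _ (f (Fin.castSucc ⟨Nat.find hQ - 1, hkn'⟩)).2
  have hv := hfar _ (f (Fin.succ ⟨Nat.find hQ - 1, hkn'⟩)).2
  set u := (f (Fin.castSucc ⟨Nat.find hQ - 1, hkn'⟩) : ℝ) with hu'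
  set v := (f (Fin.succ ⟨Nat.find hQ - 1, hkn'⟩) : ℝ) with hv'
  rw [Real.dist_eq] at hu hv ⊢
  have h1 : p - u > r := by rw [abs_of_pos (by linarith)] at hu; exact hu
  have h2 : v - p > r := by
    have hge : p ≤ v := not_lt.mp hnext
    rcases eq_or_lt_of_le hge with he | hlt
    · exfalso
      rw [← he, sub_self, abs_zero] at hv
      linarith
    · rw [abs_of_neg (by linarith)] at hv
      linarith
  rw [abs_of_nonpos (by linarith)]
  linarith

/-- lower bound -/
lemma le_ultraDiam (A : Set ℝ) (hA : A.Nonempty) (hAc : IsClosed A)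
    (hfin : hausdorffEdist A univ ≠ ⊤) :
    ENNReal.ofReal (2 * (hausdorffEdist A univ).toReal) ≤ ultraDiam A := by
  set d := (hausdorffEdist A univ).toReal with hd
  have key : ∀ r : ℝ, r < d → ENNReal.ofReal (2 * r) ≤ ultraDiam A := by
    intro r hrd
    rcases le_or_gt r 0 with hr0 | hr0
    · simp [ENNReal.ofReal_eq_zero.mpr (by linarith : 2 * r ≤ 0)]
    -- find p with infEdist p A > ofReal r
    have hlt : ENNReal.ofReal r < ⨆ p : ℝ, infEdist p A := by
      rw [sup_infEdist_eq_haus, ← ENNReal.ofReal_toReal hfin, ← hd]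
      exact (ENNReal.ofReal_lt_ofReal_iff (by linarith)).mpr hrd
    obtain ⟨p, hp⟩ := lt_iSup_iff.mp hlt
    have hfar : ∀ q ∈ A, r < dist p q := by
      intro q hq
      have h1 : infEdist p A ≤ edist p q := infEdist_le_edist_of_mem hq
      have h2 : ENNReal.ofReal r < ENNReal.ofReal (dist p q) := by
        rw [← edist_dist]; exact hp.trans_le h1
      exact (ENNReal.ofReal_lt_ofReal_iff_of_nonneg hr0.le).mp h2
    -- points on both sides of p
    have hside : ∀ (sgn : ℝ), sgn = 1 ∨ sgn = -1 → ∃ a ∈ A, sgn * (a - p) < 0 := by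
      intro sgn hsgn
      by_contra hcon
      push_neg at hcon
      have hbig : ENNReal.ofReal (d + 1) ≤ infEdist (p - sgn * (d + 1)) A := by
        apply le_infEdist.mpr
        intro a ha
        rw [edist_dist]
        apply ENNReal.ofReal_le_ofReal
        have h1 := hcon a ha
        have hd0 : (0:ℝ) ≤ d := ENNReal.toReal_nonneg
        rw [Real.dist_eq]
        rcases hsgn with h | h <;> rw [h] at h1 ⊢ <;>
          [skip; skip] <;>
          · rw [abs_sub_comm]
            rcases abs_cases (a - (p - _ * (d+1))) with ⟨heq, _⟩ | ⟨heq, _⟩ <;> nlinarith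
      have hle : infEdist (p - sgn * (d + 1)) A ≤ ENNReal.ofReal d := by
        rw [hd, ENNReal.ofReal_toReal hfin]
        rw [show hausdorffEdist A univ = hausdorffEDist A univ from rfl, hausdorffEdist_comm]
        exact infEdist_le_hausdorffEdist_of_mem (mem_univ _)
      have : ENNReal.ofReal (d + 1) ≤ ENNReal.ofReal d := hbig.trans hle
      have hd0 : (0:ℝ) ≤ d := ENNReal.toReal_nonneg
      have := (ENNReal.ofReal_le_ofReal_iff hd0).mp this
      linarith
    obtain ⟨a, ha, hap⟩ := hside 1 (Or.inl rfl)
    obtain ⟨b, hb, hbp⟩ := hside (-1) (Or.inr rfl)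
    have hap' : a < p := by linarith
    have hbp' : p < b := by linarith
    -- ultraDist from a to b is at least 2r
    have hmain : ENNReal.ofReal (2 * r) ≤ ultraDist (⟨a, ha⟩ : A) (⟨b, hb⟩ : A) := by
      rw [ultraDist]
      refine le_iInf fun n => le_iInf fun f => le_iInf fun hf0 => le_iInf fun hfl => ?_
      obtain ⟨i, hi⟩ := chain_crossing hr0 hfar f
        (by rw [hf0]; exact hap') (by rw [hfl]; exact hbp')
      refine le_trans ?_ (le_iSup _ i)
      rw [edist_dist, Subtype.dist_eq]
      exact ENNReal.ofReal_le_ofReal hi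
    exact hmain.trans (ultraDist_le_ultraDiam _ _)
  refine ENNReal.le_of_forall_pos_le_add fun ε hε _ => ?_
  have hεR : (0:ℝ) < (ε:ℝ) := hε
  have h1 := key (d - ε / 2) (by linarith)
  calc ENNReal.ofReal (2 * d) = ENNReal.ofReal (2 * (d - ε/2) + ε) := by ring_nf
    _ ≤ ENNReal.ofReal (2 * (d - ε/2)) + ENNReal.ofReal ε := ENNReal.ofReal_add_le
    _ ≤ ultraDiam A + ε := by
        rw [ENNReal.ofReal_coe_nnreal]; exact add_le_add_left h1 _

lemma ultraDiam_closed_real (A : Set ℝ) (hA : A.Nonempty) (hAc : IsClosed A)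
    (hfin : hausdorffEdist A univ ≠ ⊤) :
    ultraDiam A = ENNReal.ofReal (2 * (hausdorffEdist A univ).toReal) :=
  le_antisymm (ultraDiam_le A hA hAc hfin) (le_ultraDiam A hA hAc hfin)

/-- for a nonempty closed `X ⊆ ℝ` with `d = d_H(X, ℝ) < ∞`, the
canonical Hausdorff geodesic `C_t = B_t(X)` satisfies
`d_GH(C_t, C_s) = s − t` for all `0 ≤ t ≤ s ≤ d` (induced metrics), i.e. it is
a shortest curve for the Gromov–Hausdorff distance. -/
theorem canonical_geodesic_real_GH (X : Set ℝ) (hX : X.Nonempty) (hXc : IsClosed X)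
    (hfin : EMetric.hausdorffEdist X (Set.univ : Set ℝ) ≠ ⊤)
    (d : ℝ) (hd : d = (EMetric.hausdorffEdist X (Set.univ : Set ℝ)).toReal)
    (t s : ℝ) (h0 : 0 ≤ t) (hts : t ≤ s) (hsd : s ≤ d) :
    ghDist (Metric.cthickening t X) (Metric.cthickening s X) = ENNReal.ofReal (s - t) := by
  have h0s : 0 ≤ s := le_trans h0 hts
  have hd0 : 0 ≤ d := hd ▸ ENNReal.toReal_nonneg
  have hCt_ne : (cthickening t X).Nonempty := hX.mono (self_subset_cthickening X)
  have hCs_ne : (cthickening s X).Nonempty := hX.mono (self_subset_cthickening X)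
  have hhaust : hausdorffEdist (cthickening t X) univ = ENNReal.ofReal (d - t) := by
    rw [hd]
    exact haus_cthickening_real X hX hXc hfin h0 (by rw [← hd]; exact hts.trans hsd)
  have hhauss : hausdorffEdist (cthickening s X) univ = ENNReal.ofReal (d - s) := by
    rw [hd]
    exact haus_cthickening_real X hX hXc hfin h0s (by rw [← hd]; exact hsd)
  have hut : ultraDiam (cthickening t X) = ENNReal.ofReal (2 * (d - t)) := by
    rw [ultraDiam_closed_real _ hCt_ne isClosed_cthickening
        (by rw [hhaust]; exact ENNReal.ofReal_ne_top), hhaust,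
      ENNReal.toReal_ofReal (by linarith)]
  have hus : ultraDiam (cthickening s X) = ENNReal.ofReal (2 * (d - s)) := by
    rw [ultraDiam_closed_real _ hCs_ne isClosed_cthickening
        (by rw [hhauss]; exact ENNReal.ofReal_ne_top), hhauss,
      ENNReal.toReal_ofReal (by linarith)]
  -- the explicit correspondence
  set R : Set (↥(cthickening t X) × ↥(cthickening s X)) :=
    {p | dist ((p.1 : ℝ)) ((p.2 : ℝ)) ≤ s - t} with hR
  have hcorr : IsCorrespondence R := by
    constructor
    · intro x
      refine ⟨⟨(x:ℝ), cthickening_mono hts X x.2⟩, ?_⟩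
      show dist ((x:ℝ)) ((x:ℝ)) ≤ s - t
      rw [dist_self]
      linarith
    · intro y
      have hyd : infDist (y:ℝ) X ≤ s := infDist_le_of_mem_cthickening h0s y.2
      obtain ⟨z, hz, hdz⟩ := hXc.exists_infDist_eq_dist hX (y:ℝ)
      have hdzs : dist ((y:ℝ)) z ≤ s := by rw [← hdz]; exact hyd
      set w : ℝ := if z ≤ (y:ℝ) then z + min t ((y:ℝ) - z) else z - min t (z - (y:ℝ)) with hw
      have hwm : dist w z ≤ t ∧ dist ((y:ℝ)) w ≤ s - t := by
        rcases le_or_gt z (y:ℝ) with h | h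
        · have h1 : 0 ≤ (y:ℝ) - z := by linarith
          have hd' : dist ((y:ℝ)) z = (y:ℝ) - z := by rw [Real.dist_eq, abs_of_nonneg h1]
          constructor
          · rw [hw, if_pos h, Real.dist_eq,
              show z + min t ((y:ℝ) - z) - z = min t ((y:ℝ) - z) by ring,
              abs_of_nonneg (le_min h0 h1)]
            exact min_le_left _ _
          · rw [hw, if_pos h, Real.dist_eq,
              show (y:ℝ) - (z + min t ((y:ℝ) - z)) = ((y:ℝ) - z) - min t ((y:ℝ) - z) by ring,
              abs_of_nonneg (by simpa using min_le_right t ((y:ℝ) - z))]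
            rcases le_total t ((y:ℝ) - z) with h2 | h2
            · rw [min_eq_left h2]
              rw [hd'] at hdzs
              linarith
            · rw [min_eq_right h2]
              simp
              linarith
        · have h1 : 0 ≤ z - (y:ℝ) := by linarith
          have hd' : dist ((y:ℝ)) z = z - (y:ℝ) := by
            rw [Real.dist_eq, abs_of_nonpos (by linarith)]; ring
          constructor
          · rw [hw, if_neg (not_le.mpr h), Real.dist_eq,
              show z - min t (z - (y:ℝ)) - z = -(min t (z - (y:ℝ))) by ring,
              abs_neg, abs_of_nonneg (le_min h0 h1)]
            exact min_le_left _ _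
          · rw [hw, if_neg (not_le.mpr h), Real.dist_eq,
              show (y:ℝ) - (z - min t (z - (y:ℝ))) = -((z - (y:ℝ)) - min t (z - (y:ℝ))) by ring,
              abs_neg, abs_of_nonneg (by simpa using min_le_right t (z - (y:ℝ)))]
            rcases le_total t (z - (y:ℝ)) with h2 | h2
            · rw [min_eq_left h2]
              rw [hd'] at hdzs
              linarith
            · rw [min_eq_right h2]
              simp
              linarith
      refine ⟨⟨w, mem_cthickening_of_infDist_le hX ((infDist_le_dist_of_mem hz).trans hwm.1)⟩, ?_⟩
      show dist w ((y:ℝ)) ≤ s - t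
      rw [dist_comm]
      exact hwm.2
  have hdis : distortion R ≤ ENNReal.ofReal (2 * (s - t)) := by
    refine iSup₂_le fun p hp => iSup₂_le fun q hq => ?_
    apply ENNReal.ofReal_le_ofReal
    have h1 : dist ((p.1:ℝ)) ((p.2:ℝ)) ≤ s - t := hp
    have h2 : dist ((q.1:ℝ)) ((q.2:ℝ)) ≤ s - t := hq
    have h3 := dist_dist_dist_le ((p.1:ℝ)) ((q.1:ℝ)) ((p.2:ℝ)) ((q.2:ℝ))
    rw [Real.dist_eq] at h3
    rw [Subtype.dist_eq p.1 q.1, Subtype.dist_eq p.2 q.2]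
    linarith
  have hI : (⨅ (R' : Set (↥(cthickening t X) × ↥(cthickening s X)))
      (_ : IsCorrespondence R'), distortion R') = ENNReal.ofReal (2 * (s - t)) := by
    refine le_antisymm ((iInf₂_le R hcorr).trans hdis) ?_
    refine le_iInf fun R' => le_iInf fun hR' => ?_
    have hstab : ultraDiam (cthickening t X) ≤ ultraDiam (cthickening s X) + distortion R' :=
      ultraDiam_le_of_corr hR'
    rw [hut, hus] at hstab
    have heq : ENNReal.ofReal (2 * (s - t))
        = ENNReal.ofReal (2 * (d - t)) - ENNReal.ofReal (2 * (d - s)) := by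
      rw [← ENNReal.ofReal_sub _ (by linarith : (0:ℝ) ≤ 2 * (d - s))]
      ring_nf
    rw [heq]
    exact tsub_le_iff_left.mpr hstab
  rw [ghDist, hI, show (2:ℝ) * (s - t) = (s - t) * 2 by ring,
    ENNReal.ofReal_mul' (by norm_num : (0:ℝ) ≤ 2)]
  rw [show ENNReal.ofReal (2:ℝ) = 2 by simp]
  rw [mul_div_assoc, ENNReal.div_self (by norm_num) (by norm_num), mul_one]

end
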